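/- arXiv:1910.03436 — 4 statements merged into one kernel-verified Lean document; each statement's English description precedes it below -/
import Mathlib

section
/- Let a1, a2, b1, b2 > 0 with b1*b2 < a1*a2 and 4*a1*a2 < (b1 + b2)². Define r = (b1+b2)*(3*a1*a2 + b1*b2) / (2*a2*(a1*a2 + b1*b2 + 2*b2²)). Then b1/a2 < r < a1/b2. -/
theorem r_ratio_in_weak_range
    (a1 a2 b1 b2 : ℝ)
    (ha1 : 0 < a1) (ha2 : 0 < a2) (hb1 : 0 < b1) (hb2 : 0 < b2)
    (h1 : b1 * b2 < a1 * a2) (h2 : 4 * (a1 * a2) < (b1 + b2) ^ 2) :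
    b1 / a2 < (b1 + b2) * (3 * (a1 * a2) + b1 * b2)
        / (2 * a2 * (a1 * a2 + b1 * b2 + 2 * b2 ^ 2)) ∧
    (b1 + b2) * (3 * (a1 * a2) + b1 * b2)
        / (2 * a2 * (a1 * a2 + b1 * b2 + 2 * b2 ^ 2)) < a1 / b2 := by
  have hD : 0 < 2 * a2 * (a1 * a2 + b1 * b2 + 2 * b2 ^ 2) := by positivity
  constructor
  · rw [div_lt_div_iff₀ ha2 hD]
    nlinarith [mul_pos (mul_pos ha2 (sub_pos.mpr h1)) (by positivity : (0:ℝ) < b1 + 3 * b2)]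
  · rw [div_lt_div_iff₀ hD hb2]
    nlinarith [mul_pos (sub_pos.mpr h1) (by positivity : (0:ℝ) < 2 * (a1*a2) + b1*b2 + b2^2),
      mul_pos ha2 (mul_pos (sub_pos.mpr h1) (by positivity : (0:ℝ) < 2 * (a1*a2) + b1*b2 + b2^2))]
end

section
/- Let a1, a2, b1, b2 > 0 satisfy b1*b2 < a1*a2 and 4*a1*a2 < (b1+b2)². Let r1, r2 > 0 with r1/r2 = (b1+b2)*(3*a1*a2 + b1*b2)/(2*a2*(a1*a2 + b1*b2 + 2*b2²)). Define u* = (r1*a2 - r2*b1)/(a1*a2 - b1*b2), v* = (r2*a1 - r1*b2)/(a1*a2 - b1*b2), α = (b2*u* - a2*v*)*v*, β = (b1*v* - a1*u*)*u*. Then α + β > 0. -/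
theorem alpha_plus_beta_pos
    (r1 r2 a1 a2 b1 b2 : ℝ)
    (hr1 : 0 < r1) (hr2 : 0 < r2) (ha1 : 0 < a1) (ha2 : 0 < a2)
    (hb1 : 0 < b1) (hb2 : 0 < b2)
    (h1 : b1 * b2 < a1 * a2) (h2 : 4 * (a1 * a2) < (b1 + b2) ^ 2)
    (hr : r1 / r2 = (b1 + b2) * (3 * (a1 * a2) + b1 * b2)
        / (2 * a2 * (a1 * a2 + b1 * b2 + 2 * b2 ^ 2))) :
    0 < (b2 * ((r1 * a2 - r2 * b1) / (a1 * a2 - b1 * b2))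
          - a2 * ((r2 * a1 - r1 * b2) / (a1 * a2 - b1 * b2)))
        * ((r2 * a1 - r1 * b2) / (a1 * a2 - b1 * b2))
      + (b1 * ((r2 * a1 - r1 * b2) / (a1 * a2 - b1 * b2))
          - a1 * ((r1 * a2 - r2 * b1) / (a1 * a2 - b1 * b2)))
        * ((r1 * a2 - r2 * b1) / (a1 * a2 - b1 * b2)) := by
  set D : ℝ := a1 * a2 - b1 * b2 with hDdef
  have hD : 0 < D := by simp [hDdef]; linarith
  have hMfac : 0 < a1 * a2 + b1 * b2 + 2 * b2 ^ 2 := by positivity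
  have hM : 0 < 2 * a2 * (a1 * a2 + b1 * b2 + 2 * b2 ^ 2) := by positivity
  have hK : r1 * (2 * a2 * (a1 * a2 + b1 * b2 + 2 * b2 ^ 2))
      = r2 * ((b1 + b2) * (3 * (a1 * a2) + b1 * b2)) := by
    have := (div_eq_div_iff hr2.ne' hM.ne').mp hr
    linarith
  -- W := (b1+b2)*U*V - a1*U^2 - a2*V^2, U = r1*a2 - r2*b1, V = r2*a1 - r1*b2
  set U : ℝ := r1 * a2 - r2 * b1 with hU
  set V : ℝ := r2 * a1 - r1 * b2 with hV
  set W : ℝ := (b1 + b2) * U * V - a1 * U ^ 2 - a2 * V ^ 2 with hW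
  have hWM : W * (2 * a2 * (a1 * a2 + b1 * b2 + 2 * b2 ^ 2)) ^ 2
      = r2 ^ 2 * (a2 * D ^ 2 * ((b1 + b2) ^ 2 - 4 * (a1 * a2))
          * (a1 * a2 + b1 * b2 + 2 * b2 ^ 2)) := by
    rw [hW, hU, hV, hDdef]
    linear_combination
      (-2*r1*a1^2*a2^4 - 4*r1*a1*a2^3*b1*b2 - 8*r1*a1*a2^3*b2^2
        - 2*r1*a2^2*b1^2*b2^2 - 8*r1*a2^2*b1*b2^3 - 8*r1*a2^2*b2^4
        + 3*r2*a1^2*a2^3*b1 + 3*r2*a1^2*a2^3*b2 + 4*r2*a1*a2^2*b1^2*b2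
        + 10*r2*a1*a2^2*b1*b2^2 + 6*r2*a1*a2^2*b2^3 + r2*a2*b1^3*b2^2
        + 3*r2*a2*b1^2*b2^3 + 2*r2*a2*b1*b2^4) * hK
  have hWpos : 0 < W := by
    have hrhs : 0 < r2 ^ 2 * (a2 * D ^ 2 * ((b1 + b2) ^ 2 - 4 * (a1 * a2))
        * (a1 * a2 + b1 * b2 + 2 * b2 ^ 2)) := by
      have h2' : 0 < (b1 + b2) ^ 2 - 4 * (a1 * a2) := by linarith
      positivity
    nlinarith [sq_nonneg (2 * a2 * (a1 * a2 + b1 * b2 + 2 * b2 ^ 2))]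
  have key : (b2 * (U / D) - a2 * (V / D)) * (V / D)
      + (b1 * (V / D) - a1 * (U / D)) * (U / D) = W / D ^ 2 := by
    field_simp
    ring
  rw [key]
  positivity
end

section
/- With α = (b2*u* - a2*v*)*v* and β = (b1*v* - a1*u*)*u*, where u* = (r1*a2 - r2*b1)/(a-b), v* = (r2*a1 - r1*b2)/(a-b), a = a1*a2, b = b1*b2, a ≠ b, one has the identity α + β = (r2/(a-b))² * Q(r1/r2), where Q(r) = -a2*(a+b+2*b2²)*r² + (b1+b2)*(3*a+b)*r - a1*(a+b+2*b1²). -/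
theorem alpha_plus_beta_eq_Q
    (r1 r2 a1 a2 b1 b2 : ℝ)
    (hr2 : r2 ≠ 0) (hab : a1 * a2 ≠ b1 * b2) :
    let a := a1 * a2
    let b := b1 * b2
    let ustar := (r1 * a2 - r2 * b1) / (a - b)
    let vstar := (r2 * a1 - r1 * b2) / (a - b)
    let alpha := (b2 * ustar - a2 * vstar) * vstar
    let beta := (b1 * vstar - a1 * ustar) * ustar
    let Q : ℝ → ℝ := fun r =>
      -a2 * (a + b + 2 * b2 ^ 2) * r ^ 2 + (b1 + b2) * (3 * a + b) * r
        - a1 * (a + b + 2 * b1 ^ 2)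
    alpha + beta = (r2 / (a - b)) ^ 2 * Q (r1 / r2) := by
  have h : a1 * a2 - b1 * b2 ≠ 0 := sub_ne_zero.mpr hab
  simp only
  field_simp
  ring
end

section
/- Fix A = λ² > 0, B > 0 and let C depend affinely on d21 via C(d21) = -d12*α*λ - d21*β*λ + det J* with β > 0 and u* > 0, B(d21) = d12*v**λ² + d21*u**λ² - tr J**λ. Then the positive root d_bif(d21) = (-B(d21) + sqrt(B(d21)² - 4*A*C(d21)))/(2*A) of the quadratic tends to β/(u**λ) as d21 → +∞. -/
open Filter Topology

theorem bifurcation_point_limit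
    (lam ustar vstar d12 alpha beta detJ trJ : ℝ)
    (hlam : 0 < lam) (hu : 0 < ustar) (hv : 0 < vstar)
    (hd12 : 0 ≤ d12) (hbeta : 0 < beta) (htr : trJ < 0) :
    Tendsto (fun d21 : ℝ =>
        (-(d12 * vstar * lam ^ 2 + d21 * ustar * lam ^ 2 - trJ * lam)
          + Real.sqrt ((d12 * vstar * lam ^ 2 + d21 * ustar * lam ^ 2 - trJ * lam) ^ 2
              - 4 * lam ^ 2 * (-d12 * alpha * lam - d21 * beta * lam + detJ)))
          / (2 * lam ^ 2))
      atTop (𝓝 (beta / (ustar * lam))) := by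
  set p : ℝ := d12 * vstar * lam ^ 2 - trJ * lam with hp
  set q : ℝ := detJ - d12 * alpha * lam with hq
  set F : ℝ → ℝ := fun t =>
    (-2 * (q * t - beta * lam)) /
      ((p * t + ustar * lam ^ 2) +
        Real.sqrt ((p * t + ustar * lam ^ 2) ^ 2 - 4 * lam ^ 2 * ((q * t - beta * lam) * t)))
      with hF
  have hsq0 : Real.sqrt ((ustar * lam ^ 2) ^ 2 - 0) = ustar * lam ^ 2 := by
    rw [sub_zero, Real.sqrt_sq (by positivity)]
  have hF0 : Tendsto F (𝓝 (0:ℝ)) (𝓝 (beta / (ustar * lam))) := by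
    have hc : ContinuousAt F 0 := by
      apply ContinuousAt.div
      · fun_prop
      · exact ContinuousAt.add (by fun_prop)
          ((Real.continuous_sqrt.continuousAt).comp (by fun_prop))
      · show (fun t : ℝ => (p * t + ustar * lam ^ 2) +
            Real.sqrt ((p * t + ustar * lam ^ 2) ^ 2 - 4 * lam ^ 2 * ((q * t - beta * lam) * t))) 0 ≠ 0
        simp only [mul_zero, zero_add]
        rw [hsq0]
        positivity
    have hval : F 0 = beta / (ustar * lam) := by
      simp only [hF, mul_zero, zero_add, zero_sub, mul_neg]
      rw [hsq0]
      field_simp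
      ring
    rw [← hval]
    exact hc.tendsto
  have hinv : Tendsto (fun d : ℝ => d⁻¹) atTop (𝓝 0) := tendsto_inv_atTop_zero
  refine (hF0.comp hinv).congr' ?_
  filter_upwards [eventually_ge_atTop (max 1 (q / (beta * lam) + 1))] with d hd
  have hd1 : (1:ℝ) ≤ d := le_trans (le_max_left _ _) hd
  have hdq : q / (beta * lam) + 1 ≤ d := le_trans (le_max_right _ _) hd
  have hdpos : 0 < d := by linarith
  have hdne : d ≠ 0 := ne_of_gt hdpos
  have hbl : 0 < beta * lam := by positivity
  have hC : q - d * beta * lam < 0 := by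
    have := (div_le_iff₀ hbl).mp (by linarith : q / (beta * lam) ≤ d - 1)
    nlinarith
  set B : ℝ := d12 * vstar * lam ^ 2 + d * ustar * lam ^ 2 - trJ * lam with hB
  set C : ℝ := -d12 * alpha * lam - d * beta * lam + detJ with hCC
  have hCeq : C = q - d * beta * lam := by rw [hCC, hq]; ring
  have hCneg : C < 0 := by rw [hCeq]; exact hC
  have hBpos : 0 < B := by
    have h1 : 0 < d * ustar * lam ^ 2 := by positivity
    have h2 : 0 < -trJ * lam := by nlinarith
    have h3 : 0 ≤ d12 * vstar * lam ^ 2 := by positivity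
    nlinarith
  set D : ℝ := B ^ 2 - 4 * lam ^ 2 * C with hD
  have hDpos : 0 < D := by
    have hl2 : 0 < lam ^ 2 := by positivity
    nlinarith [sq_nonneg B]
  set s : ℝ := Real.sqrt D with hs
  have hspos : 0 < s := Real.sqrt_pos.mpr hDpos
  have hsq : s ^ 2 = D := Real.sq_sqrt hDpos.le
  have harg : (p * d⁻¹ + ustar * lam ^ 2) ^ 2 - 4 * lam ^ 2 * ((q * d⁻¹ - beta * lam) * d⁻¹)
      = D / d ^ 2 := by
    rw [hD, hB, hCC, hp, hq]
    field_simp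
    ring
  have hsqrtarg : Real.sqrt ((p * d⁻¹ + ustar * lam ^ 2) ^ 2 -
      4 * lam ^ 2 * ((q * d⁻¹ - beta * lam) * d⁻¹)) = s / d := by
    rw [harg, hs, Real.sqrt_div hDpos.le, Real.sqrt_sq hdpos.le]
  have hBd : p * d⁻¹ + ustar * lam ^ 2 = B / d := by
    rw [hp, hB]; field_simp; ring
  have hCd : q * d⁻¹ - beta * lam = C / d := by
    rw [hq, hCC]; field_simp; ring
  show F d⁻¹ = (-B + Real.sqrt (B ^ 2 - 4 * lam ^ 2 * C)) / (2 * lam ^ 2)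
  rw [hF]
  simp only
  rw [hsqrtarg, hBd, hCd, ← hD, ← hs]
  have hBsne : B + s ≠ 0 := by positivity
  have h2 : -2 * (C / d) / (B / d + s / d) = (-2 * C) / (B + s) := by
    field_simp
  rw [h2, div_eq_div_iff hBsne (by positivity)]
  linear_combination -hsq - hD
end
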